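/- Let F : I → Set ℝ be a convex set-valued function on an interval I, i.e., t•F(x) + (1−t)•F(y) ⊆ F(tx+(1−t)y) for all x, y ∈ I, t ∈ [0,1]. Then for all x, y, z ∈ I: (1/3)•F(x) + (1/3)•F(y) + (1/3)•F(z) + F((x+y+z)/3) ⊆ (2/3)•(F((x+y)/2) + F((y+z)/2) + F((x+z)/2)). -/

import Mathlib

open Pointwise

lemma popo_key (I : Set ℝ) (hI : I.OrdConnected)
    (F : ℝ → Set ℝ)
    (hconv : ∀ x ∈ I, ∀ y ∈ I, ∀ t ∈ Set.Icc (0:ℝ) 1,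
      t • F x + (1 - t) • F y ⊆ F (t * x + (1 - t) * y))
    (x y z : ℝ) (hx : x ∈ I) (hy : y ∈ I) (hz : z ∈ I)
    (hxy : x ≤ y) (hyz : y ≤ z)
    {a b c d : ℝ} (ha : a ∈ F x) (hb : b ∈ F y) (hc : c ∈ F z)
    (hd : d ∈ F ((x + y + z) / 3)) :
    ∃ u ∈ F ((x + y) / 2), ∃ v ∈ F ((y + z) / 2), ∃ w ∈ F ((x + z) / 2),
      a / 3 + b / 3 + c / 3 + d = 2 / 3 * (u + v + w) := by
  have comb : ∀ p ∈ I, ∀ q ∈ I, ∀ t : ℝ, 0 ≤ t → t ≤ 1 →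
      ∀ e ∈ F p, ∀ f ∈ F q, t * e + (1 - t) * f ∈ F (t * p + (1 - t) * q) := by
    intro p hp q hq t ht0 ht1 e he f hf
    have := hconv p hp q hq t ⟨ht0, ht1⟩
      (Set.add_mem_add (Set.smul_mem_smul_set he) (Set.smul_mem_smul_set hf))
    simpa [smul_eq_mul] using this
  set m : ℝ := (x + y + z) / 3 with hm_def
  have hm : m ∈ I := hI.out hx hz ⟨by simp only [hm_def]; linarith, by simp only [hm_def]; linarith⟩
  by_cases hxz : x = z
  · -- degenerate: x = y = z
    have hzx : z = x := hxz.symm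
    have hyx : y = x := le_antisymm (hyz.trans (le_of_eq hzx)) hxy
    rw [hm_def, hyx, hzx, show ((x + x + x) / 3 : ℝ) = x from by ring] at hd
    rw [hyx] at hb
    rw [hzx] at hc
    rw [hyx, hzx, show ((x + x) / 2 : ℝ) = (1/2 : ℝ) * x + (1 - 1/2) * x from by ring]
    refine ⟨(1/2) * a + (1 - 1/2) * d, ?_, (1/2) * b + (1 - 1/2) * d, ?_,
      (1/2) * c + (1 - 1/2) * d, ?_, by ring⟩
    · exact comb x hx x hx (1/2) (by norm_num) (by norm_num) a ha d hd
    · exact comb x hx x hx (1/2) (by norm_num) (by norm_num) b hb d hd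
    · exact comb x hx x hx (1/2) (by norm_num) (by norm_num) c hc d hd
  · have hxz' : x < z := lt_of_le_of_ne (hxy.trans hyz) hxz
    by_cases hym : y ≤ m
    · -- y ≤ m, so m < z
      have hmz : m < z := by simp only [hm_def]; linarith
      have hden : (0:ℝ) < z - m := by linarith
      set l : ℝ := (z - x) / (2 * (z - m)) with hl_def
      set u : ℝ := (z - y) / (2 * (z - m)) with hu_def
      clear_value l u
      have hl0 : 0 ≤ l := by
        rw [hl_def]; apply div_nonneg <;> linarith
      have hu0 : 0 ≤ u := by
        rw [hu_def]; apply div_nonneg <;> linarith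
      have hym' : 2 * y ≤ x + z := by simp only [hm_def] at hym; linarith
      have hl1 : l ≤ 1 := by
        rw [hl_def, div_le_one (by linarith)]
        simp only [hm_def]; linarith
      have hu1 : u ≤ 1 := by
        rw [hu_def, div_le_one (by linarith)]
        simp only [hm_def]; linarith
      have hne : z - m ≠ 0 := ne_of_gt hden
      have hargw : l * m + (1 - l) * z = (x + z) / 2 := by
        rw [hl_def]; field_simp; ring
      have hargv : u * m + (1 - u) * z = (y + z) / 2 := by
        rw [hu_def]; field_simp; ring
      have hsum : l + u = 3 / 2 := by
        rw [hl_def, hu_def, ← add_div,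
          div_eq_iff (ne_of_gt (by linarith : (0:ℝ) < 2 * (z - m)))]
        rw [hm_def]; ring
      have hw : l * d + (1 - l) * c ∈ F ((x + z) / 2) := by
        rw [← hargw]; exact comb m hm z hz l hl0 hl1 d hd c hc
      have hv : u * d + (1 - u) * c ∈ F ((y + z) / 2) := by
        rw [← hargv]; exact comb m hm z hz u hu0 hu1 d hd c hc
      have hu : (1/2) * a + (1 - 1/2) * b ∈ F ((x + y) / 2) := by
        rw [show ((x + y) / 2 : ℝ) = (1/2 : ℝ) * x + (1 - 1/2) * y from by ring]
        exact comb x hx y hy (1/2) (by norm_num) (by norm_num) a ha b hb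
      exact ⟨_, hu, _, hv, _, hw, by linear_combination (2/3 * (c - d)) * hsum⟩
    · -- m ≤ y, so x < m
      have hym : m ≤ y := le_of_not_ge hym
      have hxm : x < m := by simp only [hm_def]; linarith
      have hden : (0:ℝ) < m - x := by linarith
      set l : ℝ := (y - x) / (2 * (m - x)) with hl_def
      set u : ℝ := (z - x) / (2 * (m - x)) with hu_def
      clear_value l u
      have hl0 : 0 ≤ l := by rw [hl_def]; apply div_nonneg <;> linarith
      have hu0 : 0 ≤ u := by rw [hu_def]; apply div_nonneg <;> linarith
      have hym' : x + z ≤ 2 * y := by simp only [hm_def] at hym; linarith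
      have hl1 : l ≤ 1 := by
        rw [hl_def, div_le_one (by linarith)]
        simp only [hm_def]; linarith
      have hu1 : u ≤ 1 := by
        rw [hu_def, div_le_one (by linarith)]
        simp only [hm_def]; linarith
      have hargu : l * m + (1 - l) * x = (x + y) / 2 := by
        rw [hl_def]; field_simp; ring
      have hargw : u * m + (1 - u) * x = (x + z) / 2 := by
        rw [hu_def]; field_simp; ring
      have hsum : l + u = 3 / 2 := by
        rw [hl_def, hu_def, ← add_div,
          div_eq_iff (ne_of_gt (by linarith : (0:ℝ) < 2 * (m - x)))]
        rw [hm_def]; ring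
      have hu' : l * d + (1 - l) * a ∈ F ((x + y) / 2) := by
        rw [← hargu]; exact comb m hm x hx l hl0 hl1 d hd a ha
      have hw : u * d + (1 - u) * a ∈ F ((x + z) / 2) := by
        rw [← hargw]; exact comb m hm x hx u hu0 hu1 d hd a ha
      have hv : (1/2) * b + (1 - 1/2) * c ∈ F ((y + z) / 2) := by
        rw [show ((y + z) / 2 : ℝ) = (1/2 : ℝ) * y + (1 - 1/2) * z from by ring]
        exact comb y hy z hz (1/2) (by norm_num) (by norm_num) b hb c hc
      exact ⟨_, hu', _, hv, _, hw, by linear_combination (2/3 * (a - d)) * hsum⟩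

lemma popo_build (F : ℝ → Set ℝ) {x y z a b c d u v w : ℝ}
    (hu : u ∈ F ((x + y) / 2)) (hv : v ∈ F ((y + z) / 2)) (hw : w ∈ F ((x + z) / 2))
    (heq : a / 3 + b / 3 + c / 3 + d = 2 / 3 * (u + v + w)) :
    (1 / 3 : ℝ) • a + (1 / 3 : ℝ) • b + (1 / 3 : ℝ) • c + d ∈
      (2 / 3 : ℝ) • (F ((x + y) / 2) + F ((y + z) / 2) + F ((x + z) / 2)) :=
  ⟨u + v + w, Set.add_mem_add (Set.add_mem_add hu hv) hw, by
    simp only [smul_eq_mul]; linarith⟩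

theorem stmt_12 (I : Set ℝ) (hI : I.OrdConnected)
    (F : ℝ → Set ℝ)
    (hconv : ∀ x ∈ I, ∀ y ∈ I, ∀ t ∈ Set.Icc (0:ℝ) 1,
      t • F x + (1 - t) • F y ⊆ F (t * x + (1 - t) * y)) :
    ∀ x ∈ I, ∀ y ∈ I, ∀ z ∈ I,
      (1 / 3 : ℝ) • F x + (1 / 3 : ℝ) • F y + (1 / 3 : ℝ) • F z +
        F ((x + y + z) / 3) ⊆
      (2 / 3 : ℝ) • (F ((x + y) / 2) + F ((y + z) / 2) + F ((x + z) / 2)) := by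
  intro x hx y hy z hz r hr
  obtain ⟨p, hp, d, hd, rfl⟩ := hr
  obtain ⟨q, hq, c', hc', rfl⟩ := hp
  obtain ⟨a', ha', b', hb', rfl⟩ := hq
  obtain ⟨a, ha, rfl⟩ := ha'
  obtain ⟨b, hb, rfl⟩ := hb'
  obtain ⟨c, hc, rfl⟩ := hc'
  rcases le_total x y with h1 | h1 <;> rcases le_total y z with h2 | h2 <;>
    rcases le_total x z with h3 | h3
  · -- x ≤ y ≤ z
    obtain ⟨u, hu, v, hv, w, hw, heq⟩ :=
      popo_key I hI F hconv x y z hx hy hz h1 h2 ha hb hc hd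
    exact popo_build F hu hv hw heq
  · -- x ≤ y ≤ z (with z ≤ x, all equal)
    obtain ⟨u, hu, v, hv, w, hw, heq⟩ :=
      popo_key I hI F hconv x y z hx hy hz h1 h2 ha hb hc hd
    exact popo_build F hu hv hw heq
  · -- x ≤ z ≤ y : order (x, z, y)
    obtain ⟨u, hu, v, hv, w, hw, heq⟩ :=
      popo_key I hI F hconv x z y hx hz hy h3 h2 ha hc hb
        (by rw [show ((x + z + y) / 3 : ℝ) = (x + y + z) / 3 from by ring]; exact hd)
    rw [show ((z + y) / 2 : ℝ) = (y + z) / 2 from by ring] at hv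
    exact popo_build F hw hv hu (by linarith)
  · -- z ≤ x ≤ y : order (z, x, y)
    obtain ⟨u, hu, v, hv, w, hw, heq⟩ :=
      popo_key I hI F hconv z x y hz hx hy h3 h1 hc ha hb
        (by rw [show ((z + x + y) / 3 : ℝ) = (x + y + z) / 3 from by ring]; exact hd)
    rw [show ((z + x) / 2 : ℝ) = (x + z) / 2 from by ring] at hu
    rw [show ((z + y) / 2 : ℝ) = (y + z) / 2 from by ring] at hw
    exact popo_build F hv hw hu (by linarith)
  · -- y ≤ x ≤ z : order (y, x, z)
    obtain ⟨u, hu, v, hv, w, hw, heq⟩ :=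
      popo_key I hI F hconv y x z hy hx hz h1 h3 hb ha hc
        (by rw [show ((y + x + z) / 3 : ℝ) = (x + y + z) / 3 from by ring]; exact hd)
    rw [show ((y + x) / 2 : ℝ) = (x + y) / 2 from by ring] at hu
    exact popo_build F hu hw hv (by linarith)
  · -- y ≤ z ≤ x : order (y, z, x)
    obtain ⟨u, hu, v, hv, w, hw, heq⟩ :=
      popo_key I hI F hconv y z x hy hz hx h2 h3 hb hc ha
        (by rw [show ((y + z + x) / 3 : ℝ) = (x + y + z) / 3 from by ring]; exact hd)
    rw [show ((z + x) / 2 : ℝ) = (x + z) / 2 from by ring] at hv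
    rw [show ((y + x) / 2 : ℝ) = (x + y) / 2 from by ring] at hw
    exact popo_build F hw hu hv (by linarith)
  · -- z ≤ y ≤ x (with x ≤ z) : order (z, y, x)
    obtain ⟨u, hu, v, hv, w, hw, heq⟩ :=
      popo_key I hI F hconv z y x hz hy hx h2 h1 hc hb ha
        (by rw [show ((z + y + x) / 3 : ℝ) = (x + y + z) / 3 from by ring]; exact hd)
    rw [show ((z + y) / 2 : ℝ) = (y + z) / 2 from by ring] at hu
    rw [show ((y + x) / 2 : ℝ) = (x + y) / 2 from by ring] at hv
    rw [show ((z + x) / 2 : ℝ) = (x + z) / 2 from by ring] at hw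
    exact popo_build F hv hu hw (by linarith)
  · -- z ≤ y ≤ x : order (z, y, x)
    obtain ⟨u, hu, v, hv, w, hw, heq⟩ :=
      popo_key I hI F hconv z y x hz hy hx h2 h1 hc hb ha
        (by rw [show ((z + y + x) / 3 : ℝ) = (x + y + z) / 3 from by ring]; exact hd)
    rw [show ((z + y) / 2 : ℝ) = (y + z) / 2 from by ring] at hu
    rw [show ((y + x) / 2 : ℝ) = (x + y) / 2 from by ring] at hv
    rw [show ((z + x) / 2 : ℝ) = (x + z) / 2 from by ring] at hw
    exact popo_build F hv hu hw (by linarith)
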